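/- Let A be a commutative ℚ-algebra and a, b ∈ A. For every integer i ≥ 1 one has the identity (1 − ab)^i / i = (1 − a)^i / i + Σ_{j=1}^{i} C(i−1, j−1) · a^j · (1−a)^{i−j} · (1−b)^j / j. -/

import Mathlib

open Finset in
theorem stmt8 {A : Type*} [CommRing A] [Algebra ℚ A] (a b : A) (i : ℕ) (hi : 1 ≤ i) :
    (i : ℚ)⁻¹ • (1 - a * b) ^ i =
      (i : ℚ)⁻¹ • (1 - a) ^ i +
        ∑ j ∈ Finset.Icc 1 i,
          ((Nat.choose (i - 1) (j - 1) : ℚ) / j) • (a ^ j * (1 - a) ^ (i - j) * (1 - b) ^ j) := by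
  have h1 : (1 - a * b) = a * (1 - b) + (1 - a) := by ring
  rw [h1, add_pow, smul_sum, Finset.sum_range_succ']
  simp only [pow_zero, one_mul, Nat.sub_zero, Nat.choose_zero_right, Nat.cast_one, mul_one]
  rw [add_comm]
  congr 1
  rw [← Finset.Ico_add_one_right_eq_Icc, Finset.sum_Ico_eq_sum_range]
  simp only [Nat.add_sub_cancel, Nat.succ_sub_one]
  apply Finset.sum_congr rfl
  intro k hk
  simp only [Finset.mem_range] at hk
  have hiz : (i : ℚ) ≠ 0 := by positivity
  have hkey : ((i.choose (k + 1) : ℚ)) / i = ((i - 1).choose k : ℚ) / (k + 1) := by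
    have h := Nat.add_one_mul_choose_eq (i - 1) k
    rw [Nat.sub_add_cancel hi] at h
    have : (i : ℚ) * ((i - 1).choose k : ℚ) = (i.choose (k + 1) : ℚ) * (k + 1) := by
      exact_mod_cast congrArg (Nat.cast : ℕ → ℚ) h
    field_simp
    linarith [this]
  have hc : ((i.choose (k + 1) : ℕ) : A) = ((i.choose (k + 1) : ℚ)) • (1 : A) := by
    rw [← map_natCast (algebraMap ℚ A), Algebra.algebraMap_eq_smul_one]
  have h2 : (1 + k) = k + 1 := by ring
  rw [h2, hc]
  rw [mul_smul_comm, smul_smul, mul_one, mul_pow]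
  rw [show (i : ℚ)⁻¹ * (i.choose (k + 1) : ℚ) = ((i - 1).choose k : ℚ) / (k + 1) by
    rw [← hkey]; field_simp]
  congr 1
  · push_cast; ring
  · ring
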